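/- Let n ≥ 3 and let v_1, ..., v_{2^{n-1}} be nonzero vectors in F_2^n with sum zero whose span has dimension strictly less than n. Then the multiset {v_1, ..., v_{2^{n-1}}} can be partitioned into two multisets of size 2^{n-2} each, such that the sum of the elements in each multiset is zero. -/

import Mathlib

section helpers

variable {V : Type*} [AddCommGroup V] [DecidableEq V]

lemma even_nsmul_eq_zero' (h2 : ∀ x : V, x + x = 0) {m : ℕ} (hm : Even m) (w : V) :
    m • w = 0 := by
  obtain ⟨r, rfl⟩ := hm
  rw [add_nsmul]
  exact h2 _

lemma odd_nsmul_eq_self' (h2 : ∀ x : V, x + x = 0) {m : ℕ} (hm : ¬ Even m) (w : V) :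
    m • w = w := by
  obtain ⟨r, rfl⟩ := Nat.odd_iff.mpr (Nat.not_even_iff.mp hm)
  rw [add_nsmul, one_nsmul, even_nsmul_eq_zero' h2 (even_two_mul r), zero_add]

lemma even_select {α : Type*} [DecidableEq α] (s : Finset α) (e : α → ℕ)
    (he : ∀ a ∈ s, Even (e a)) :
    ∀ K : ℕ, Even K → K ≤ ∑ a ∈ s, e a →
    ∃ b : α → ℕ, (∀ a, b a ≤ e a) ∧ (∀ a, Even (b a)) ∧ (∀ a ∉ s, b a = 0) ∧
      ∑ a ∈ s, b a = K := by
  induction s using Finset.induction with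
  | empty =>
    intro K hK hle
    simp only [Finset.sum_empty, Nat.le_zero] at hle
    exact ⟨fun _ => 0, fun a => Nat.zero_le _, fun a => Even.zero, fun a _ => rfl, by simp [hle]⟩
  | @insert a s ha ih =>
    intro K hK hle
    have hea : Even (e a) := he a (Finset.mem_insert_self a s)
    have hes : ∀ x ∈ s, Even (e x) := fun x hx => he x (Finset.mem_insert_of_mem hx)
    set q := min (e a) K with hq
    have hqe : Even q := by
      rcases le_total (e a) K with h | h
      · simpa [hq, min_eq_left h] using hea
      · simpa [hq, min_eq_right h] using hK
    have hqK : q ≤ K := min_le_right _ _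
    have hrec : K - q ≤ ∑ x ∈ s, e x := by
      rw [Finset.sum_insert ha] at hle
      omega
    have hKq : Even (K - q) := by
      rw [Nat.even_sub hqK]
      exact ⟨fun _ => hqe, fun _ => hK⟩
    obtain ⟨b, hb1, hb2, hb3, hb4⟩ := ih hes (K - q) hKq hrec
    refine ⟨Function.update b a q, ?_, ?_, ?_, ?_⟩
    · intro x
      rcases eq_or_ne x a with rfl | hx
      · simp [Function.update_self, hq]
      · simpa [Function.update_of_ne hx] using hb1 x
    · intro x
      rcases eq_or_ne x a with rfl | hx
      · simpa [Function.update_self] using hqe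
      · simpa [Function.update_of_ne hx] using hb2 x
    · intro x hx
      have hxa : x ≠ a := fun h => hx (h ▸ Finset.mem_insert_self a s)
      have hxs : x ∉ s := fun h => hx (Finset.mem_insert_of_mem h)
      simpa [Function.update_of_ne hxa] using hb3 x hxs
    · rw [Finset.sum_insert ha, Function.update_self]
      have : ∑ x ∈ s, Function.update b a q x = ∑ x ∈ s, b x := by
        apply Finset.sum_congr rfl
        intro x hx
        exact Function.update_of_ne (fun h => ha (by rwa [h] at hx)) _ _
      rw [this, hb4]
      omega

lemma quad_extract (h2 : ∀ x : V, x + x = 0)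
    (W : Finset V) (hadd : ∀ a ∈ W, ∀ b ∈ W, a + b ∈ W) :
    ∀ (j : ℕ) (T : Finset V), T ⊆ W → (0 : V) ∉ T → W.card + 8 * j ≤ 2 * T.card + 5 →
    ∃ S : Finset V, S ⊆ T ∧ S.card = 4 * j ∧ ∑ x ∈ S, x = 0 := by
  intro j
  induction j with
  | zero => exact fun T _ _ _ => ⟨∅, Finset.empty_subset _, by simp, by simp⟩
  | succ j ih =>
    intro T hTW h0T hcard
    -- find a quadruple
    have hT3 : 3 ≤ T.card := by
      have := Finset.card_le_card hTW
      omega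
    obtain ⟨a, ha⟩ := Finset.card_pos.mp (by omega : 0 < T.card)
    have hTa : 0 < (T.erase a).card := by
      rw [Finset.card_erase_of_mem ha]; omega
    obtain ⟨b, hb⟩ := Finset.card_pos.mp hTa
    have hba : b ≠ a := Finset.ne_of_mem_erase hb
    have hbT : b ∈ T := Finset.mem_of_mem_erase hb
    set x := a + b with hxdef
    have hx0 : x ≠ 0 := by
      intro h
      apply hba
      have hab : a + b = a + a := by rw [h2, ← hxdef]; exact h
      exact add_left_cancel hab
    have hxW : x ∈ W := hadd a (hTW ha) b (hTW hbT)
    set T' := T.image (fun t => x + t) with hT'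
    have hT'card : T'.card = T.card := Finset.card_image_of_injective _ (add_right_injective x)
    have hUnion : T ∪ T' ⊆ W := by
      intro y hy
      rcases Finset.mem_union.mp hy with h | h
      · exact hTW h
      · obtain ⟨t, ht, rfl⟩ := Finset.mem_image.mp h
        exact hadd x hxW t (hTW ht)
    have hInter : 3 ≤ ((T ∩ T').card) := by
      have h1 : (T ∪ T').card + (T ∩ T').card = T.card + T'.card :=
        Finset.card_union_add_card_inter _ _
      have h2' : (T ∪ T').card ≤ W.card := Finset.card_le_card hUnion
      omega
    have hc : ∃ c ∈ T ∩ T', c ≠ a ∧ c ≠ b := by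
      have h3 : 0 < ((T ∩ T') \ {a, b}).card := by
        have := Finset.card_le_card_sdiff_add_card (s := T ∩ T') (t := ({a, b} : Finset V))
        have hab2 : ({a, b} : Finset V).card ≤ 2 := Finset.card_insert_le _ _ |>.trans (by simp)
        omega
      obtain ⟨c, hc⟩ := Finset.card_pos.mp h3
      obtain ⟨hc1, hc2⟩ := Finset.mem_sdiff.mp hc
      refine ⟨c, hc1, ?_, ?_⟩ <;> intro h <;> exact hc2 (by simp [h])
    obtain ⟨c, hcmem, hca, hcb⟩ := hc
    have hcT : c ∈ T := (Finset.mem_inter.mp hcmem).1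
    have hcT' : c ∈ T' := (Finset.mem_inter.mp hcmem).2
    obtain ⟨t, htT, htc⟩ := Finset.mem_image.mp hcT'
    set d := x + c with hd
    have hdT : d ∈ T := by
      have : d = t := by
        rw [hd, ← htc, ← add_assoc, h2, zero_add]
      rwa [this]
    have hdc : d ≠ c := by
      intro h
      apply hx0
      have hxc : x + c = 0 + c := by rw [zero_add, ← hd]; exact h
      exact add_right_cancel hxc
    have hdb : d ≠ b := by
      intro h
      apply hca
      have : c = x + d := by rw [hd, ← add_assoc, h2, zero_add]
      rw [this, h, hxdef, add_assoc, h2, add_zero]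
    have hda : d ≠ a := by
      intro h
      apply hcb
      have : c = x + d := by rw [hd, ← add_assoc, h2, zero_add]
      rw [this, h, hxdef, add_comm a b, add_assoc, h2, add_zero]
    -- quadruple {a, b, c, d}
    set Q : Finset V := {a, b, c, d} with hQ
    have hQT : Q ⊆ T := by
      intro y hy
      simp only [hQ, Finset.mem_insert, Finset.mem_singleton] at hy
      rcases hy with rfl | rfl | rfl | rfl
      · exact ha
      · exact hbT
      · exact hcT
      · exact hdT
    have hQcard : Q.card = 4 := by
      rw [hQ]
      rw [Finset.card_insert_of_notMem (by simp [hba.symm, hca.symm, hda.symm])]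
      rw [Finset.card_insert_of_notMem (by simp [hcb.symm, hdb.symm])]
      rw [Finset.card_insert_of_notMem (by simp [hdc.symm])]
      simp
    have hQsum : ∑ y ∈ Q, y = 0 := by
      rw [hQ]
      rw [Finset.sum_insert (by simp [hba.symm, hca.symm, hda.symm])]
      rw [Finset.sum_insert (by simp [hcb.symm, hdb.symm])]
      rw [Finset.sum_insert (by simp [hdc.symm])]
      rw [Finset.sum_singleton]
      rw [hd, hxdef]
      abel_nf
      simp only [two_nsmul, two_zsmul, h2, add_zero, zero_add]
      try simp [h2]
    -- recurse on T \ Q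
    have hrecT : (T \ Q).card = T.card - 4 := by
      rw [Finset.card_sdiff_of_subset hQT, hQcard]
    obtain ⟨S', hS'sub, hS'card, hS'sum⟩ := ih (T \ Q) ((Finset.sdiff_subset).trans hTW)
      (fun h => h0T ((Finset.mem_sdiff.mp h).1)) (by omega)
    refine ⟨Q ∪ S', ?_, ?_, ?_⟩
    · exact Finset.union_subset hQT (hS'sub.trans Finset.sdiff_subset)
    · have hdisj : Disjoint Q S' := by
        refine Finset.disjoint_left.mpr ?_
        intro y hyQ hyS
        exact ((Finset.mem_sdiff.mp (hS'sub hyS)).2) hyQ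
      rw [Finset.card_union_of_disjoint hdisj, hQcard, hS'card]
      ring
    · have hdisj : Disjoint Q S' := by
        refine Finset.disjoint_left.mpr ?_
        intro y hyQ hyS
        exact ((Finset.mem_sdiff.mp (hS'sub hyS)).2) hyQ
      rw [Finset.sum_union hdisj, hQsum, hS'sum, add_zero]

end helpers

/-- For `n ≥ 3` and `2^{n-1}` nonzero vectors in `F_2^n` with sum zero whose span has
dimension strictly less than `n`, the index set can be partitioned into two halves of
size `2^{n-2}` whose vector-sums are each zero. -/
theorem partition_into_two_zero_sum_halves (n : ℕ) (hn : 3 ≤ n)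
    (v : Fin (2 ^ (n - 1)) → (Fin n → ZMod 2))
    (hnz : ∀ i, v i ≠ 0) (hsum : ∑ i, v i = 0)
    (hdim : Module.finrank (ZMod 2) (Submodule.span (ZMod 2) (Set.range v)) < n) :
    ∃ A : Finset (Fin (2 ^ (n - 1))), A.card = 2 ^ (n - 2) ∧
      ∑ i ∈ A, v i = 0 ∧ ∑ i ∈ Aᶜ, v i = 0 := by
  classical
  have h2 : ∀ x : Fin n → ZMod 2, x + x = 0 := by
    intro x
    funext i
    have : (2 : ZMod 2) = 0 := rfl
    calc x i + x i = 2 * x i := by ring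
    _ = 0 := by rw [this, zero_mul]
  set k := 2 ^ (n - 2) with hk
  have hNk : 2 ^ (n - 1) = 2 * k := by
    rw [hk]
    have : n - 1 = (n - 2) + 1 := by omega
    rw [this, pow_succ, mul_comm]
  have hkeven : Even k := by
    have h3 : n - 2 = (n - 3) + 1 := by omega
    rw [hk, h3, pow_succ]
    exact ⟨2 ^ (n - 3), by ring⟩
  -- the span as a finset
  set P := Submodule.span (ZMod 2) (Set.range v) with hP
  have hfinP : (P : Set (Fin n → ZMod 2)).Finite := Set.toFinite _
  set WF : Finset (Fin n → ZMod 2) := hfinP.toFinset with hWF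
  have hmemWF : ∀ x : Fin n → ZMod 2, x ∈ WF ↔ x ∈ P := by
    intro x
    rw [hWF, Set.Finite.mem_toFinset]
    rfl
  have hWFadd : ∀ a ∈ WF, ∀ b ∈ WF, a + b ∈ WF := by
    intro a haW b hbW
    rw [hmemWF] at haW hbW ⊢
    exact P.add_mem haW hbW
  have hWFcard : WF.card = 2 ^ (Module.finrank (ZMod 2) P) := by
    rw [hWF, Set.Finite.card_toFinset]
    have : Fintype.card ↥(P : Set (Fin n → ZMod 2)) = Fintype.card ↥P := rfl
    rw [this]
    have := Module.card_eq_pow_finrank (K := ZMod 2) (V := ↥P)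
    rwa [ZMod.card] at this
  have hWFle : WF.card ≤ 2 * k := by
    have hfr : Module.finrank (ZMod 2) P ≤ n - 1 := by omega
    rw [hWFcard, ← hNk]
    exact Nat.pow_le_pow_right (by norm_num) hfr
  have hWFeven : Even WF.card := by
    rw [hWFcard]
    have hpos : 0 < Module.finrank (ZMod 2) P := by
      rw [Module.finrank_pos_iff]
      have hi : (0 : Fin (2 ^ (n-1))) = 0 := rfl
      have h0 : (2:ℕ) ^ (n - 1) > 0 := by positivity
      refine ⟨⟨⟨v ⟨0, h0⟩, Submodule.subset_span ⟨⟨0, h0⟩, rfl⟩⟩, 0, ?_⟩⟩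
      intro h
      apply hnz ⟨0, h0⟩
      exact congrArg Subtype.val h
    obtain ⟨r, hr⟩ : ∃ r, Module.finrank (ZMod 2) P = r + 1 := ⟨_, (Nat.succ_pred_eq_of_pos hpos).symm⟩
    rw [hr, pow_succ]
    exact ⟨2 ^ r, by ring⟩
  -- fibers
  set D : Finset (Fin n → ZMod 2) := Finset.image v Finset.univ with hD
  set F : (Fin n → ZMod 2) → Finset (Fin (2 ^ (n - 1))) := fun w => Finset.univ.filter (fun i => v i = w) with hF
  set m : (Fin n → ZMod 2) → ℕ := fun w => (F w).card with hm
  have hDsub : D ⊆ WF := by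
    intro w hw
    obtain ⟨i, _, rfl⟩ := Finset.mem_image.mp hw
    rw [hmemWF]
    exact Submodule.subset_span ⟨i, rfl⟩
  have h0D : (0 : Fin n → ZMod 2) ∉ D := by
    intro h
    obtain ⟨i, _, hi⟩ := Finset.mem_image.mp h
    exact hnz i hi
  have hmsum : ∑ w ∈ D, m w = 2 * k := by
    rw [← hNk]
    have := Finset.card_eq_sum_card_fiberwise (f := v) (s := Finset.univ)
      (t := D) (fun x _ => Finset.mem_image_of_mem v (Finset.mem_univ x))
    rw [← this]
    simp
  have hfibsum : ∀ w, ∑ i ∈ F w, v i = m w • w := by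
    intro w
    have : ∀ i ∈ F w, v i = w := by
      intro i hi
      exact (Finset.mem_filter.mp hi).2
    rw [Finset.sum_congr rfl this, Finset.sum_const]
  have hsumD : ∑ w ∈ D, m w • w = 0 := by
    have := Finset.sum_fiberwise_of_maps_to (g := v) (f := v) (s := Finset.univ) (t := D)
      (fun x _ => Finset.mem_image_of_mem v (Finset.mem_univ x))
    rw [← hsum]
    rw [← this]
    apply Finset.sum_congr rfl
    intro w _
    exact (hfibsum w).symm
  -- odd-multiplicity values
  set T : Finset (Fin n → ZMod 2) := D.filter (fun w => ¬ Even (m w)) with hT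
  set t := T.card with ht
  have hTsum : ∑ w ∈ T, w = 0 := by
    have hsplit := Finset.sum_filter_add_sum_filter_not D (fun w => ¬ Even (m w))
      (fun w => m w • w)
    rw [hsumD] at hsplit
    have h1 : ∑ w ∈ D.filter (fun w => ¬ Even (m w)), m w • w = ∑ w ∈ T, w := by
      apply Finset.sum_congr rfl
      intro w hw
      exact odd_nsmul_eq_self' h2 (Finset.mem_filter.mp hw).2 w
    have h2' : ∑ w ∈ D.filter (fun w => ¬¬ Even (m w)), m w • w = 0 := by
      apply Finset.sum_eq_zero
      intro w hw
      exact even_nsmul_eq_zero' h2 (not_not.mp (Finset.mem_filter.mp hw).2) w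
    rw [h1, h2'] at hsplit
    simpa using hsplit
  have hTD : T ⊆ D := Finset.filter_subset _ _
  have hmod : ∀ w ∈ D, m w % 2 = (if w ∈ T then 1 else 0) := by
    intro w hw
    by_cases hwT : w ∈ T
    · rw [if_pos hwT]
      exact Nat.not_even_iff.mp (Finset.mem_filter.mp hwT).2
    · rw [if_neg hwT]
      have : Even (m w) := by
        by_contra hodd
        exact hwT (Finset.mem_filter.mpr ⟨hw, hodd⟩)
      exact Nat.even_iff.mp this
  have htsum : ∑ w ∈ D, m w % 2 = t := by
    rw [Finset.sum_congr rfl hmod, Finset.sum_ite_mem, Finset.inter_eq_right.mpr hTD]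
    simp [ht]
  have hesum : ∑ w ∈ D, 2 * (m w / 2) = 2 * k - t := by
    have h1 : ∑ w ∈ D, m w = ∑ w ∈ D, (2 * (m w / 2) + m w % 2) := by
      apply Finset.sum_congr rfl
      intro w _
      omega
    rw [Finset.sum_add_distrib, htsum] at h1
    omega
  have hteven : Even t := by
    have h1 : ∑ w ∈ D, m w = ∑ w ∈ D, (2 * (m w / 2) + m w % 2) := by
      apply Finset.sum_congr rfl
      intro w _
      omega
    rw [Finset.sum_add_distrib, htsum, hmsum, ← Finset.mul_sum] at h1
    rw [Nat.even_iff]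
    omega
  have hTWF : T ⊆ WF := hTD.trans hDsub
  have ht2 : t + 2 ≤ WF.card := by
    have h0T : (0 : Fin n → ZMod 2) ∉ T := fun h => h0D (hTD h)
    have hsub : T ⊆ WF.erase 0 := by
      intro w hw
      exact Finset.mem_erase.mpr ⟨fun h => h0T (h ▸ hw), hTWF hw⟩
    have hle : t ≤ WF.card - 1 := by
      have := Finset.card_le_card hsub
      rw [Finset.card_erase_of_mem ((hmemWF 0).mpr P.zero_mem)] at this
      exact this
    have h1 : 1 ≤ WF.card := Finset.card_pos.mpr ⟨0, (hmemWF 0).mpr P.zero_mem⟩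
    rcases hteven with ⟨α, hα⟩
    rcases hWFeven with ⟨β, hβ⟩
    omega
  -- the zero-sum seed S
  have hseed : ∃ S : Finset (Fin n → ZMod 2), S ⊆ T ∧ Even S.card ∧ S.card ≤ k ∧ t ≤ k + S.card ∧
      ∑ w ∈ S, w = 0 := by
    rcases le_or_gt t k with hcase | hcase
    · exact ⟨∅, Finset.empty_subset _, by simp, by simp, by simpa using hcase, by simp⟩
    · set j0 := (t - k + 2) / 4 with hj0
      have h0T : (0 : Fin n → ZMod 2) ∉ T := fun h => h0D (hTD h)
      rcases hteven with ⟨α, hα⟩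
      rcases hkeven with ⟨κ, hκ⟩
      have hext : WF.card + 8 * j0 ≤ 2 * t + 5 := by omega
      obtain ⟨S, hS1, hS2, hS3⟩ := quad_extract h2 WF hWFadd j0 T hTWF h0T hext
      refine ⟨S, hS1, by rw [hS2]; exact ⟨2 * j0, by ring⟩, ?_, ?_, hS3⟩
      · rw [hS2]; omega
      · rw [hS2]; omega
  obtain ⟨S, hST, hSeven, hSk, htkS, hSsum⟩ := hseed
  have hSD : S ⊆ D := hST.trans hTD
  -- choose even counts b
  set e : (Fin n → ZMod 2) → ℕ := fun w => 2 * (m w / 2) with he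
  have heD : ∀ w ∈ D, Even (e w) := fun w _ => ⟨m w / 2, by show 2 * (m w / 2) = _; ring⟩
  have hKeven : Even (k - S.card) := by
    rcases hkeven with ⟨κ, hκ⟩
    rcases hSeven with ⟨σ, hσ⟩
    rw [Nat.even_iff]
    omega
  have hKle : k - S.card ≤ ∑ w ∈ D, e w := by
    have h' : ∑ w ∈ D, e w = 2 * k - t := hesum
    rw [h']
    omega
  obtain ⟨b, hb1, hb2, hb3, hb4⟩ := even_select D e heD (k - S.card) hKeven hKle
  -- capacities
  set cap : (Fin n → ZMod 2) → ℕ := fun w => b w + (if w ∈ S then 1 else 0) with hcap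
  have hcaple : ∀ w, cap w ≤ m w := by
    intro w
    rw [hcap]
    by_cases hwS : w ∈ S
    · have hwT : w ∈ T := hST hwS
      have hodd : m w % 2 = 1 := Nat.not_even_iff.mp (Finset.mem_filter.mp hwT).2
      have hbw : b w ≤ 2 * (m w / 2) := hb1 w
      simp only [if_pos hwS]
      omega
    · have hbw : b w ≤ 2 * (m w / 2) := hb1 w
      simp only [if_neg hwS]
      omega
  -- choose subsets of fibers
  have hchoose : ∀ w : Fin n → ZMod 2, ∃ B : Finset (Fin (2 ^ (n - 1))), B ⊆ F w ∧ B.card = cap w := by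
    intro w
    exact Finset.exists_subset_card_eq ((hcaple w).trans (le_of_eq rfl))
  choose Aw hAw1 hAw2 using hchoose
  have hvAw : ∀ w, ∀ i ∈ Aw w, v i = w := by
    intro w i hi
    exact (Finset.mem_filter.mp (hAw1 w hi)).2
  have hdisj : ∀ w ∈ D, ∀ w' ∈ D, w ≠ w' → Disjoint (Aw w) (Aw w') := by
    intro w _ w' _ hww
    refine Finset.disjoint_left.mpr ?_
    intro i hi hi'
    exact hww ((hvAw w i hi).symm.trans (hvAw w' i hi'))
  set A : Finset (Fin (2 ^ (n - 1))) := D.biUnion Aw with hA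
  have hindsum : ∑ w ∈ D, (if w ∈ S then 1 else 0 : ℕ) = S.card := by
    rw [Finset.sum_ite_mem, Finset.inter_eq_right.mpr hSD]
    simp
  have hAcard : A.card = k := by
    rw [hA, Finset.card_biUnion hdisj]
    have : ∑ w ∈ D, (Aw w).card = ∑ w ∈ D, cap w := by
      apply Finset.sum_congr rfl
      intro w _
      exact hAw2 w
    rw [this, hcap]
    rw [Finset.sum_add_distrib, hb4, hindsum]
    omega
  have hAsum : ∑ i ∈ A, v i = 0 := by
    rw [hA, Finset.sum_biUnion hdisj]
    have h1 : ∀ w ∈ D, ∑ i ∈ Aw w, v i = cap w • w := by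
      intro w _
      rw [Finset.sum_congr rfl (hvAw w), Finset.sum_const, hAw2 w]
    rw [Finset.sum_congr rfl h1]
    have h2' : ∀ w ∈ D, cap w • w = (if w ∈ S then w else 0) := by
      intro w _
      rw [hcap]
      simp only []
      rw [add_nsmul, even_nsmul_eq_zero' h2 (hb2 w) w, zero_add]
      by_cases hwS : w ∈ S
      · simp [hwS]
      · simp [hwS]
    rw [Finset.sum_congr rfl h2', Finset.sum_ite_mem, Finset.inter_eq_right.mpr hSD, hSsum]
  refine ⟨A, by rw [hAcard, hk], hAsum, ?_⟩
  have := Finset.sum_add_sum_compl A v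
  rw [hsum, hAsum, zero_add] at this
  exact this
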